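/- Let p be a prime and define the shift map σ on ℕ by: for n ∈ ℕ with base-p expansion n = Σ_{i=0}^{k} a_i p^i (a_k the leading digit, k ≥ 1), σ(n) = n − a_k p^k, and σ(n) = 0 for n ∈ {0,1,…,p−1}. If E ⊆ ℕ is σ-invariant, i.e. σ(E) ⊆ E, then E = 𝓕_p(E) ∩ ℕ. -/

import Mathlib

open MeasureTheory Filter Set Metric
open scoped ENNReal NNReal

noncomputable section

/-- Number of elements of `E` in the integer interval `(M, M+n]`. -/
def cnt (E : Set ℤ) (M : ℤ) (n : ℕ) : ℕ := (E ∩ Set.Ioc M (M + n)).ncard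

/-- The `s`-counting measure `ℋ_s(E) = limsup_{|I|→∞} |E ∩ I| / |I|^s`,
where `I` ranges over integer intervals `(M, N]`. -/
def countingMeasure (s : ℝ) (E : Set ℤ) : ℝ≥0∞ :=
  Filter.atTop.limsup fun n : ℕ => ⨆ M : ℤ, (cnt E M n : ℝ≥0∞) / (n : ℝ≥0∞) ^ s

/-- The upper Banach density `d*(E) = limsup_{|I|→∞} |E ∩ I| / |I|`. -/
def upperBanachDensity (E : Set ℤ) : ℝ≥0∞ := countingMeasure 1 E

variable (p : ℕ) [Fact p.Prime]

instance : MeasurableSpace ℤ_[p] := borel ℤ_[p]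
instance : BorelSpace ℤ_[p] := ⟨rfl⟩

/-- Projection `Π_p(F) = F ∩ ℤ` of a set `F ⊆ ℤ_p`, as a set of integers. -/
def proj (F : Set ℤ_[p]) : Set ℤ := {m : ℤ | (m : ℤ_[p]) ∈ F}

/-- The closed ball of radius `p^{-n}` around `x` in `ℤ_p`. -/
def pball (x : ℤ_[p]) (n : ℕ) : Set ℤ_[p] := Metric.closedBall x ((p : ℝ) ^ (-(n : ℤ)))

/-- `limsup_{|I|→∞} |A ∩ B ∩ I| / |B ∩ I|^s` for sets of integers `A, B`. -/
def relCount (s : ℝ) (A B : Set ℤ) : ℝ≥0∞ :=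
  Filter.atTop.limsup fun n : ℕ => ⨆ M : ℤ, (cnt (A ∩ B) M n : ℝ≥0∞) / (cnt B M n : ℝ≥0∞) ^ s

/-- `η_s(F; x, n) = limsup_{|I|→∞} |F ∩ B_{p^{-n}}(x) ∩ I| / |B_{p^{-n}}(x) ∩ I|^s`. -/
def etaN (s : ℝ) (F : Set ℤ_[p]) (x : ℤ_[p]) (n : ℕ) : ℝ≥0∞ :=
  relCount s (proj p F) (proj p (pball p x n))

/-- The `s`-counting local measure `η_s(F; x) = limsup_{n→∞} η_s(F; x, n)`. -/
def eta (s : ℝ) (F : Set ℤ_[p]) (x : ℤ_[p]) : ℝ≥0∞ :=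
  Filter.atTop.limsup fun n : ℕ => etaN p s F x n

/-- `N_{p^{-n}}(F)`: minimal number of closed balls of radius `p^{-n}` covering `F`. -/
def coverNumber (F : Set ℤ_[p]) (n : ℕ) : ℕ :=
  sInf {k : ℕ | ∃ t : Finset ℤ_[p], t.card = k ∧
    F ⊆ ⋃ x ∈ t, Metric.closedBall x ((p : ℝ) ^ (-(n : ℤ)))}

/-- Upper box-counting dimension of `F ⊆ ℤ_p`. -/
def upperBoxDim (F : Set ℤ_[p]) : ℝ :=
  Filter.atTop.limsup fun n : ℕ => Real.log (coverNumber p F n) / (n * Real.log p)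

/-- Lower box-counting dimension of `F ⊆ ℤ_p`. -/
def lowerBoxDim (F : Set ℤ_[p]) : ℝ :=
  Filter.atTop.liminf fun n : ℕ => Real.log (coverNumber p F n) / (n * Real.log p)

/-- Maximal number of points of `E` in an integer interval of length `n`. -/
def maxCnt (E : Set ℤ) (n : ℕ) : ℕ := sSup {k : ℕ | ∃ M : ℤ, cnt E M n = k}

/-- The counting dimension `D(E) = limsup_{|I|→∞} log |E ∩ I| / log |I|`. -/
def countingDim (E : Set ℤ) : ℝ :=
  Filter.atTop.limsup fun n : ℕ => Real.log (maxCnt E n) / Real.log n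

/-- `θ̲*^s(F) = limsup_n min_{a ∈ G_n} ℋ^s(F ∩ B_{p^{-n}}(a)) / p^{-ns}`, where the
minimum runs over residues `a` whose ball `B_{p^{-n}}(a)` meets `F`. -/
def thetaStar (s : ℝ) (F : Set ℤ_[p]) : ℝ≥0∞ :=
  Filter.atTop.limsup fun n : ℕ =>
    ⨅ (a : ℤ) (_ : (pball p (a : ℤ_[p]) n ∩ F).Nonempty),
      μH[s] (F ∩ pball p (a : ℤ_[p]) n) / (p : ℝ≥0∞) ^ (-((n : ℝ) * s))

/-- A finite arithmetic progression in `ℤ` with common difference `d`. -/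
def IsAPWithDiff (A : Set ℤ) (d : ℤ) : Prop :=
  ∃ a : ℤ, ∃ L : ℕ, A = (fun i : ℕ => a + d * (i : ℤ)) '' {i : ℕ | i < L}

/-- If `E ⊆ ℕ` is invariant under deleting the leading base-`p` digit,
then `E = 𝓕_p(E) ∩ ℕ`. -/
theorem shift_invariant_is_projection (E : Set ℕ)
    (hσ : ∀ n ∈ E, n % p ^ (Nat.log p n) ∈ E) :
    E = {m : ℕ | (m : ℤ_[p]) ∈ closure ((fun m : ℕ => (m : ℤ_[p])) '' E)} := by
  have hp : p.Prime := Fact.out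
  apply Set.Subset.antisymm
  · intro m hm
    exact subset_closure ⟨m, hm, rfl⟩
  · intro m hm
    -- key: E is closed under taking mod p^j
    have key : ∀ n, n ∈ E → ∀ j, n % p ^ j ∈ E := by
      intro n
      induction n using Nat.strong_induction_on with
      | _ n ih =>
        intro hn j
        rcases lt_or_ge n (p ^ j) with h | h
        · simpa [Nat.mod_eq_of_lt h] using hn
        · have hn0 : n ≠ 0 := by
            have : 0 < p ^ j := pow_pos hp.pos j
            omega
          have hjk : j ≤ Nat.log p n :=
            (Nat.le_log_iff_pow_le hp.one_lt hn0).mpr h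
          set k := Nat.log p n with hk
          have hkn : p ^ k ≤ n := Nat.pow_log_le_self p hn0
          have hlt : n % p ^ k < n :=
            lt_of_lt_of_le (Nat.mod_lt _ (pow_pos hp.pos k)) hkn
          have := ih (n % p ^ k) hlt (hσ n hn) j
          rwa [Nat.mod_mod_of_dvd _ (pow_dvd_pow p hjk)] at this
    -- use closure membership at scale p^{-k}, k = log p m + 1
    set k := Nat.log p m + 1 with hkdef
    have hmk : m < p ^ k := Nat.lt_pow_succ_log_self hp.one_lt m
    have hε : (0 : ℝ) < (p : ℝ) ^ (-(k : ℤ)) := by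
      apply zpow_pos
      exact_mod_cast hp.pos
    obtain ⟨b, hbE, hb⟩ := Metric.mem_closure_iff.mp hm _ hε
    obtain ⟨n, hnE, rfl⟩ := hbE
    have hnorm : ‖((m : ℤ_[p]) - n)‖ ≤ (p : ℝ) ^ (-(k : ℤ)) :=
      le_of_lt (by simpa [dist_eq_norm] using hb)
    have hdvd : ((p : ℤ) ^ k) ∣ ((m : ℤ) - n) := by
      have : ‖(((m : ℤ) - n : ℤ) : ℤ_[p])‖ ≤ (p : ℝ) ^ (-(k : ℤ)) := by
        push_cast
        exact hnorm
      exact PadicInt.norm_int_le_pow_iff_dvd.mp this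
    have hmod : (n : ℤ) % (p : ℤ) ^ k = (m : ℤ) % (p : ℤ) ^ k :=
      Int.modEq_iff_dvd.mpr hdvd
    have : (n % p ^ k : ℕ) = m := by
      have h1 : ((n % p ^ k : ℕ) : ℤ) = ((m % p ^ k : ℕ) : ℤ) := by
        push_cast
        exact hmod
      have h2 : (n % p ^ k : ℕ) = m % p ^ k := Nat.cast_injective h1
      rw [h2, Nat.mod_eq_of_lt hmk]
    have hE := key n hnE k
    rwa [this] at hE

end
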